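/- Let ν be a real number with 1/6 < ν < 1/4, let λ₀ > 4ν, let C₁, C₂ ≥ 0 be constants, and let t₀ be an integer with t₀ > λ₀. Suppose (a_t)_{t ≥ t₀} is a sequence of nonnegative real numbers satisfying a_{t+1} ≤ (1 − λ₀/t) a_t + C₁ t^{−4ν−1} + C₂ t^{2ν−2} for all integers t ≥ t₀. Then there exists a constant C > 0 such that a_t ≤ C t^{−1+2ν} for all t ≥ t₀. -/

import Mathlib

/-- Bernoulli-type inequality for negative exponents `-1 ≤ p ≤ 0`:
`(x+1)^p ≥ x^p + p x^(p-1)` for `x ≥ 1`. -/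
lemma bern_neg {x p : ℝ} (hx : 1 ≤ x) (hp0 : -1 ≤ p) (hp1 : p ≤ 0) :
    x ^ p + p * x ^ (p - 1) ≤ (x + 1) ^ p := by
  have hxpos : (0 : ℝ) < x := lt_of_lt_of_le one_pos hx
  set q : ℝ := -p with hq
  have hq0 : 0 ≤ q := by simp [hq]; linarith
  have hq1 : q ≤ 1 := by simp [hq]; linarith
  set s : ℝ := 1 / x with hs
  have hs0 : 0 ≤ s := by positivity
  have hs1 : (-1 : ℝ) ≤ s := by linarith
  have hsle : s ≤ 1 := by
    rw [hs, div_le_one hxpos]; exact hx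
  have h1 : (1 + s) ^ q ≤ 1 + q * s := rpow_one_add_le_one_add_mul_self hs1 hq0 hq1
  have hqs : 0 ≤ q * s := mul_nonneg hq0 hs0
  have h1s : (0 : ℝ) < 1 + s := by linarith
  have hpow_pos : (0 : ℝ) < (1 + s) ^ q := Real.rpow_pos_of_pos h1s q
  -- (1+s)^p = ((1+s)^q)⁻¹ ≥ (1 + q*s)⁻¹ ≥ 1 - q*s = 1 + p*s
  have h2 : (1 : ℝ) + p * s ≤ (1 + s) ^ p := by
    have hinv : (1 + s) ^ p = ((1 + s) ^ q)⁻¹ := by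
      rw [hq, ← Real.rpow_neg h1s.le, neg_neg]
    rw [hinv]
    have h3 : (1 + q * s)⁻¹ ≤ ((1 + s) ^ q)⁻¹ :=
      inv_anti₀ hpow_pos h1
    have h4 : (1 : ℝ) - q * s ≤ (1 + q * s)⁻¹ := by
      have hpos' : (0 : ℝ) < 1 + q * s := by linarith
      rw [← mul_le_mul_iff_right₀ hpos', mul_inv_cancel₀ hpos'.ne']
      nlinarith [sq_nonneg (q * s)]
    have : 1 + p * s = 1 - q * s := by rw [hq]; ring
    linarith
  -- multiply by x^p > 0
  have hxp : (0 : ℝ) < x ^ p := Real.rpow_pos_of_pos hxpos p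
  have hmul : x ^ p * (1 + p * s) ≤ x ^ p * (1 + s) ^ p :=
    mul_le_mul_of_nonneg_left h2 hxp.le
  have hfac : x ^ p * (1 + s) ^ p = (x + 1) ^ p := by
    rw [← Real.mul_rpow hxpos.le h1s.le]
    congr 1
    rw [hs]
    field_simp
  have hxps : x ^ p * (p * s) = p * x ^ (p - 1) := by
    have : x ^ (p - 1) = x ^ p * x⁻¹ := by
      rw [Real.rpow_sub hxpos, Real.rpow_one, div_eq_mul_inv]
    rw [this, hs]; ring
  calc x ^ p + p * x ^ (p - 1) = x ^ p * (1 + p * s) := by rw [mul_add, mul_one, hxps]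
    _ ≤ x ^ p * (1 + s) ^ p := hmul
    _ = (x + 1) ^ p := hfac

/-- Deterministic recursion lemma behind the convergence-rate theorem: if `1/6 < ν < 1/4`,
`λ₀ > 4ν`, `t₀ > λ₀`, and a nonnegative sequence satisfies
`a_{t+1} ≤ (1 − λ₀/t) a_t + C₁ t^{−4ν−1} + C₂ t^{2ν−2}` for `t ≥ t₀`, then
`a_t ≤ C t^{−1+2ν}` for some `C > 0` and all `t ≥ t₀`. -/
theorem stmt_15 (ν lam₀ C₁ C₂ : ℝ) (hν1 : 1 / 6 < ν) (hν2 : ν < 1 / 4)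
    (hlam : 4 * ν < lam₀) (hC₁ : 0 ≤ C₁) (hC₂ : 0 ≤ C₂)
    (t₀ : ℕ) (ht₀ : lam₀ < (t₀ : ℝ))
    (a : ℕ → ℝ) (ha : ∀ t : ℕ, t₀ ≤ t → 0 ≤ a t)
    (hrec : ∀ t : ℕ, t₀ ≤ t →
      a (t + 1) ≤ (1 - lam₀ / t) * a t + C₁ * (t : ℝ) ^ (-4 * ν - 1)
        + C₂ * (t : ℝ) ^ (2 * ν - 2)) :
    ∃ C : ℝ, 0 < C ∧ ∀ t : ℕ, t₀ ≤ t → a t ≤ C * (t : ℝ) ^ (-1 + 2 * ν) := by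
  have hν0 : 0 < ν := by linarith
  have hlam0 : 0 < lam₀ := by linarith
  have ht₀pos : (0 : ℝ) < (t₀ : ℝ) := lt_trans hlam0 ht₀
  have ht₀1 : 1 ≤ t₀ := by exact_mod_cast Nat.one_le_cast.mpr (by exact_mod_cast Nat.pos_of_ne_zero (by rintro rfl; simp at ht₀pos))
  have hD : 0 < lam₀ + 2 * ν - 1 := by linarith
  set D := lam₀ + 2 * ν - 1 with hDdef
  set C := max ((C₁ + C₂) / D) (a t₀ * (t₀ : ℝ) ^ (1 - 2 * ν)) + 1 with hCdef
  have hmax0 : 0 ≤ max ((C₁ + C₂) / D) (a t₀ * (t₀ : ℝ) ^ (1 - 2 * ν)) :=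
    le_trans (div_nonneg (by linarith) hD.le) (le_max_left _ _)
  have hCpos : 0 < C := by rw [hCdef]; linarith
  have hC1 : (C₁ + C₂) / D ≤ C := by
    rw [hCdef]; nlinarith [le_max_left ((C₁ + C₂) / D) (a t₀ * (t₀ : ℝ) ^ (1 - 2 * ν))]
  have hCD : C₁ + C₂ ≤ C * D := (div_le_iff₀ hD).mp hC1
  have hC2 : a t₀ * (t₀ : ℝ) ^ (1 - 2 * ν) ≤ C := by
    rw [hCdef]
    nlinarith [le_max_right ((C₁ + C₂) / D) (a t₀ * (t₀ : ℝ) ^ (1 - 2 * ν))]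
  refine ⟨C, hCpos, ?_⟩
  intro t ht
  induction t, ht using Nat.le_induction with
  | base =>
    have hpow : (t₀ : ℝ) ^ (1 - 2 * ν) * (t₀ : ℝ) ^ (-1 + 2 * ν) = 1 := by
      rw [← Real.rpow_add ht₀pos]
      norm_num
    have h0 : a t₀ = (a t₀ * (t₀ : ℝ) ^ (1 - 2 * ν)) * (t₀ : ℝ) ^ (-1 + 2 * ν) := by
      rw [mul_assoc, hpow, mul_one]
    rw [h0]
    exact mul_le_mul_of_nonneg_right hC2 (Real.rpow_nonneg ht₀pos.le _)
  | succ t ht ih =>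
    set x : ℝ := (t : ℝ) with hxdef
    have hxt₀ : (t₀ : ℝ) ≤ x := hxdef ▸ Nat.cast_le.mpr ht
    have hx1 : (1 : ℝ) ≤ x := le_trans (by exact_mod_cast ht₀1) hxt₀
    have hxpos : (0 : ℝ) < x := lt_of_lt_of_le one_pos hx1
    have hlamx : lam₀ < x := lt_of_lt_of_le ht₀ hxt₀
    set p : ℝ := -1 + 2 * ν with hpdef
    have hfac0 : 0 ≤ 1 - lam₀ / x := by
      have : lam₀ / x < 1 := (div_lt_one hxpos).mpr hlamx
      linarith
    have hxp_nonneg : 0 ≤ x ^ p := Real.rpow_nonneg hxpos.le p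
    have hxp1_nonneg : 0 ≤ x ^ (p - 1) := Real.rpow_nonneg hxpos.le _
    have hexp1 : x ^ (-4 * ν - 1) ≤ x ^ (2 * ν - 2) :=
      Real.rpow_le_rpow_of_exponent_le hx1 (by linarith)
    have hexp2 : (2 : ℝ) * ν - 2 = p - 1 := by rw [hpdef]; ring
    have hxx : x ^ p = x ^ (p - 1) * x := by
      rw [← Real.rpow_add_one hxpos.ne' (p - 1)]; ring_nf
    have hstep1 : a (t + 1) ≤ (1 - lam₀ / x) * (C * x ^ p) + (C₁ + C₂) * x ^ (p - 1) := by
      have h := hrec t ht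
      have h1 : (1 - lam₀ / x) * a t ≤ (1 - lam₀ / x) * (C * x ^ p) :=
        mul_le_mul_of_nonneg_left ih hfac0
      have h2 : C₁ * x ^ (-4 * ν - 1) ≤ C₁ * x ^ (p - 1) := by
        rw [← hexp2]; exact mul_le_mul_of_nonneg_left hexp1 hC₁
      have h3 : C₂ * x ^ (2 * ν - 2) = C₂ * x ^ (p - 1) := by rw [hexp2]
      calc a (t + 1) ≤ (1 - lam₀ / x) * a t + C₁ * x ^ (-4 * ν - 1) + C₂ * x ^ (2 * ν - 2) := h
        _ ≤ (1 - lam₀ / x) * (C * x ^ p) + C₁ * x ^ (p - 1) + C₂ * x ^ (p - 1) := by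
            rw [h3] at *; linarith
        _ = (1 - lam₀ / x) * (C * x ^ p) + (C₁ + C₂) * x ^ (p - 1) := by ring
    have hexpand : (1 - lam₀ / x) * (C * x ^ p) = C * x ^ p - C * lam₀ * x ^ (p - 1) := by
      rw [hxx]; field_simp
    have hstep2 : a (t + 1) ≤ C * x ^ p + (C₁ + C₂ - C * lam₀) * x ^ (p - 1) := by
      rw [hexpand] at hstep1; linarith
    have hkey : (C₁ + C₂ - C * lam₀) * x ^ (p - 1) ≤ C * p * x ^ (p - 1) := by
      apply mul_le_mul_of_nonneg_right _ hxp1_nonneg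
      have : C * D = C * lam₀ + C * p := by rw [hDdef, hpdef]; ring
      nlinarith
    have hbern : x ^ p + p * x ^ (p - 1) ≤ (x + 1) ^ p :=
      bern_neg hx1 (by rw [hpdef]; linarith) (by rw [hpdef]; linarith)
    have hfinal : a (t + 1) ≤ C * (x + 1) ^ p := by
      calc a (t + 1) ≤ C * x ^ p + C * p * x ^ (p - 1) := by linarith
        _ = C * (x ^ p + p * x ^ (p - 1)) := by ring
        _ ≤ C * (x + 1) ^ p := mul_le_mul_of_nonneg_left hbern hCpos.le
    have hcast : ((t + 1 : ℕ) : ℝ) = x + 1 := by push_cast [hxdef]; ring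
    rw [hcast]
    exact hfinal
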